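/- Let q > 1, p ∈ (0,1) and 0 < δ < λ < 1/2, and suppose that q·log(min{p, 1−p})/((q−1)·log √(λδ)) < 1. Let k ≥ 1 be an integer, B₁ := diag(λ, δ) and B₂ := λ·R_{π/(2k)}, where R_θ denotes the 2×2 rotation matrix through angle θ. Then 𝔯_q(B₁, B₂, p) ≤ q·log(min{p, 1−p})/((q−1)·log √(λδ)). -/

import Mathlib

open MeasureTheory Filter Topology

noncomputable section

/-- The operator norm of a `d × d` real matrix induced by the Euclidean norm on `ℝ^d`. -/
noncomputable def opNorm {d : ℕ} (A : Matrix (Fin d) (Fin d) ℝ) : ℝ :=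
  ‖Matrix.toEuclideanCLM (𝕜 := ℝ) (n := Fin d) A‖

/-- The singular values of a `d × d` real matrix, in decreasing order:
`singularValues A j` is `σ_{j+1}(A)`, the `(j+1)`-st largest singular value. -/
noncomputable def singularValues {d : ℕ} (A : Matrix (Fin d) (Fin d) ℝ) : Fin d → ℝ :=
  fun j =>
    (fun i => Real.sqrt ((Matrix.isHermitian_iff_isSymm.mpr (Matrix.isSymm_transpose_mul_self A)).eigenvalues i))
      (Tuple.sort (fun i => Real.sqrt ((Matrix.isHermitian_iff_isSymm.mpr (Matrix.isSymm_transpose_mul_self A)).eigenvalues i))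
        (Fin.rev j))

/-- The singular value function `φ^s(A)`. -/
noncomputable def svf {d : ℕ} (s : ℝ) (A : Matrix (Fin d) (Fin d) ℝ) : ℝ :=
  if (d : ℝ) ≤ s then |A.det| ^ (s / d)
  else ∏ i : Fin d,
    if (i : ℕ) < ⌊s⌋₊ then singularValues A i
    else if (i : ℕ) = ⌊s⌋₊ then singularValues A i ^ (s - (⌊s⌋₊ : ℝ))
    else 1

/-- The product `A_{w 0} ⋯ A_{w (n-1)}` of matrices along the word `w`. -/
noncomputable def wordProd {d n : ℕ} (A : Fin 2 → Matrix (Fin d) (Fin d) ℝ)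
    (w : Fin n → Fin 2) : Matrix (Fin d) (Fin d) ℝ :=
  (List.ofFn fun j => A (w j)).prod

/-- The probability vector `(p, 1-p)`. -/
noncomputable def pvec (p : ℝ) : Fin 2 → ℝ := ![p, 1 - p]

/-- `Σ_{i₁,…,i_n ∈ {1,2}} φ^s(A_{i₁}⋯A_{i_n})^{1−q} p_{i₁}^q ⋯ p_{i_n}^q`. -/
noncomputable def Zsum (A : Fin 2 → Matrix (Fin 2) (Fin 2) ℝ) (p q s : ℝ) (n : ℕ) : ℝ :=
  ∑ w : Fin n → Fin 2,
    svf s (wordProd A w) ^ (1 - q) * ∏ j : Fin n, pvec p (w j) ^ q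

/-- `𝔯_q(A₁, A₂, p)`. -/
noncomputable def rqDim (A : Fin 2 → Matrix (Fin 2) (Fin 2) ℝ) (p q : ℝ) : ℝ :=
  sSup {s : ℝ | 0 < s ∧ Summable (fun n : ℕ => Zsum A p q s (n + 1))}

/-- `R_q(A₁, A₂, p, s)`. -/
noncomputable def Rq (A : Fin 2 → Matrix (Fin 2) (Fin 2) ℝ) (p q s : ℝ) : ℝ :=
  limUnder atTop (fun n : ℕ => (1 / (n : ℝ)) * Real.log (Zsum A p q s n))

/-- The minimum over all words of length `n` of the norm of the corresponding product. -/
noncomputable def minNormProd (A : Fin 2 → Matrix (Fin 2) (Fin 2) ℝ) (n : ℕ) : ℝ :=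
  ⨅ w : Fin n → Fin 2, opNorm (wordProd A w)

/-- The lower spectral radius `ϱ̲(A₁, A₂)`. -/
noncomputable def lsr (A : Fin 2 → Matrix (Fin 2) (Fin 2) ℝ) : ℝ :=
  limUnder atTop (fun n : ℕ => minNormProd A n ^ (1 / (n : ℝ)))

/-- Pairs of invertible `2 × 2` matrices of operator norm less than one. -/
def validPair : Set (Matrix (Fin 2) (Fin 2) ℝ × Matrix (Fin 2) (Fin 2) ℝ) :=
  {B | IsUnit B.1 ∧ IsUnit B.2 ∧ opNorm B.1 < 1 ∧ opNorm B.2 < 1}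

/-- Rotation of `ℝ²` about the origin through angle `θ`. -/
noncomputable def rot (θ : ℝ) : Matrix (Fin 2) (Fin 2) ℝ :=
  !![Real.cos θ, -Real.sin θ; Real.sin θ, Real.cos θ]

/-- `(A₁, A₂)` is `(c, ε, λ)`-resistant. -/
def ResistantWith (c ε lam : ℝ) (A : Fin 2 → Matrix (Fin 2) (Fin 2) ℝ) : Prop :=
  ∀ n : ℕ, 1 ≤ n → ∀ w : Fin n → Fin 2,
    ((Finset.univ.filter fun j => w j = 1).card : ℝ) ≤ ε * n →
    c * lam ^ n ≤ opNorm (wordProd A w)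

/-- `(A₁, A₂)` is resistant. -/
def Resistant (A : Fin 2 → Matrix (Fin 2) (Fin 2) ℝ) : Prop :=
  ∃ c > (0:ℝ), ∃ ε > (0:ℝ), ∃ lam > (1:ℝ), ResistantWith c ε lam A

/-- `ℋ`: `2 × 2` real matrices of determinant one with two unequal real eigenvalues. -/
def Hset : Set (Matrix (Fin 2) (Fin 2) ℝ) :=
  {H | H.det = 1 ∧ ∃ a b : ℝ, a ≠ b ∧ H.charpoly.IsRoot a ∧ H.charpoly.IsRoot b}

/-- `ℰ`: `2 × 2` real matrices of determinant one with non-real eigenvalues. -/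
def Eset : Set (Matrix (Fin 2) (Fin 2) ℝ) :=
  {R | R.det = 1 ∧ ∀ x : ℝ, ¬ R.charpoly.IsRoot x}


/-- Abbreviation for the space of `2 × 2` real matrices. -/
abbrev Mat2 := Matrix (Fin 2) (Fin 2) ℝ


/-! ### Auxiliary lemmas -/

section Aux

open Filter

lemma rot_mul' (x y : ℝ) : rot x * rot y = rot (x + y) := by
  simp only [rot, Matrix.mul_fin_two, Real.cos_add, Real.sin_add]
  congr 1 <;> ring

lemma rot_pow' (θ : ℝ) (n : ℕ) : rot θ ^ n = rot (n * θ) := by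
  induction n with
  | zero => simp [rot, Matrix.one_fin_two]
  | succ n ih =>
      rw [pow_succ, ih, rot_mul']
      congr 1
      push_cast; ring

lemma rot_pi_div_two' : rot (Real.pi / 2) = !![0, -1; 1, 0] := by
  simp [rot]

lemma eig_eq' {n : ℕ} (M : Matrix (Fin n) (Fin n) ℝ) (hM : M.IsHermitian) (t : ℝ)
    (h : M = t • 1) (i : Fin n) : hM.eigenvalues i = t := by
  subst h
  have h1 : star (Matrix.IsHermitian.eigenvectorUnitary hM : Matrix (Fin n) (Fin n) ℝ) * (t • 1) * (Matrix.IsHermitian.eigenvectorUnitary hM : Matrix (Fin n) (Fin n) ℝ) = Matrix.diagonal (RCLike.ofReal ∘ hM.eigenvalues) := by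
    have := hM.conjStarAlgAut_star_eigenvectorUnitary
    simpa using this
  set U := (Matrix.IsHermitian.eigenvectorUnitary hM : Matrix (Fin n) (Fin n) ℝ)
  have hU : star U * U = 1 := Unitary.coe_star_mul_self _
  rw [Matrix.mul_smul, mul_one, smul_mul_assoc, hU] at h1
  have := congr_fun (congr_fun h1.symm i) i
  simpa [Matrix.diagonal_apply_eq] using this

lemma singularValues_smul_one' {d : ℕ} (t : ℝ) (j : Fin d) :
    singularValues (t • (1 : Matrix (Fin d) (Fin d) ℝ)) j = |t| := by
  have h : Matrix.transpose (t • (1 : Matrix (Fin d) (Fin d) ℝ)) *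
      (t • (1 : Matrix (Fin d) (Fin d) ℝ)) = (t * t) • 1 := by
    simp [Matrix.transpose_smul, smul_mul_smul_comm, smul_smul]
  unfold singularValues
  simp only [eig_eq' _ _ (t * t) h]
  rw [← Real.sqrt_mul_self_eq_abs]

lemma singularValues_nonneg' {d : ℕ} (A : Matrix (Fin d) (Fin d) ℝ) (i : Fin d) :
    0 ≤ singularValues A i :=
  Real.sqrt_nonneg _

lemma svf_nonneg' {d : ℕ} (s : ℝ) (A : Matrix (Fin d) (Fin d) ℝ) : 0 ≤ svf s A := by
  unfold svf
  split
  · exact Real.rpow_nonneg (abs_nonneg _) _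
  · refine Finset.prod_nonneg fun i _ => ?_
    split
    · exact singularValues_nonneg' A i
    · split
      · exact Real.rpow_nonneg (singularValues_nonneg' A i) _
      · norm_num

lemma svf_smul_one' (s : ℝ) (hs : 0 < s) (t : ℝ) (ht : t ≠ 0) :
    svf s (t • (1 : Matrix (Fin 2) (Fin 2) ℝ)) = |t| ^ s := by
  have habs : (0:ℝ) < |t| := abs_pos.mpr ht
  unfold svf
  rw [Matrix.det_smul, Matrix.det_one, mul_one]
  split
  · rw [abs_pow, Fintype.card_fin, ← Real.rpow_natCast |t| 2, ← Real.rpow_mul habs.le]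
    congr 1; ring
  · rename_i hds
    push_neg at hds
    have hfloor : ⌊s⌋₊ < 2 := Nat.floor_lt hs.le |>.mpr (by exact_mod_cast hds)
    rw [Fin.prod_univ_two]
    simp only [singularValues_smul_one']
    obtain h | h : ⌊s⌋₊ = 0 ∨ ⌊s⌋₊ = 1 := by omega
    · rw [h]; norm_num
    · rw [h]; norm_num
      nth_rewrite 1 [← Real.rpow_one (|t|)]
      rw [← Real.rpow_add habs]
      norm_num

lemma wordProd_append' {d a b : ℕ} (A : Fin 2 → Matrix (Fin d) (Fin d) ℝ)
    (u : Fin a → Fin 2) (v : Fin b → Fin 2) :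
    wordProd A (Fin.append u v) = wordProd A u * wordProd A v := by
  unfold wordProd
  rw [← List.prod_append, ← List.ofFn_fin_append]
  apply congrArg List.prod
  apply congrArg List.ofFn
  funext i
  refine Fin.addCases (fun i => ?_) (fun i => ?_) i <;>
    simp [Fin.append_left, Fin.append_right]

lemma wordProd_const' {d n : ℕ} (A : Fin 2 → Matrix (Fin d) (Fin d) ℝ) (i : Fin 2) :
    wordProd A (fun _ : Fin n => i) = A i ^ n := by
  unfold wordProd
  rw [List.ofFn_const, List.prod_replicate]

/-- length of the `m`-fold repetition of a word of length `n₀` -/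
def repLen (n₀ : ℕ) : ℕ → ℕ
  | 0 => 0
  | m + 1 => n₀ + repLen n₀ m

lemma repLen_eq (n₀ m : ℕ) : repLen n₀ m = n₀ * m := by
  induction m with
  | zero => simp [repLen]
  | succ m ih => rw [repLen, ih]; ring

/-- the `m`-fold repetition of a word -/
def wrep {n₀ : ℕ} (u : Fin n₀ → Fin 2) : (m : ℕ) → Fin (repLen n₀ m) → Fin 2
  | 0 => Fin.elim0
  | m + 1 => Fin.append u (wrep u m)

lemma wordProd_wrep' {d n₀ : ℕ} (A : Fin 2 → Matrix (Fin d) (Fin d) ℝ)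
    (u : Fin n₀ → Fin 2) (m : ℕ) :
    wordProd A (wrep u m) = (wordProd A u) ^ m := by
  induction m with
  | zero => simp [wrep, wordProd]; rfl
  | succ m ih =>
      show wordProd A (Fin.append u (wrep u m)) = _
      rw [wordProd_append', ih, pow_succ']

lemma block_sq' (a b c : ℝ) :
    (Matrix.diagonal ![a, b] * (c • !![0, -1; 1, 0])) ^ 2
      = (-(c * c * a * b)) • (1 : Matrix (Fin 2) (Fin 2) ℝ) := by
  ext i j
  fin_cases i <;> fin_cases j <;>
    simp [pow_two, Matrix.mul_apply, Fin.sum_univ_two, Matrix.one_fin_two, Matrix.diagonal] <;>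
    ring

lemma rpow_pow_comm' {t : ℝ} (ht : 0 < t) (y : ℝ) (m : ℕ) :
    ((t ^ m : ℝ)) ^ y = (t ^ y) ^ m := by
  rw [← Real.rpow_natCast t m, ← Real.rpow_natCast (t ^ y) m, ← Real.rpow_mul ht.le,
    ← Real.rpow_mul ht.le, mul_comm]

lemma tendsto_lin_div' (a₁ b₁ a₂ b₂ : ℝ) (h : a₂ ≠ 0) :
    Tendsto (fun j : ℕ => ((j:ℝ) * a₁ + b₁) / ((j:ℝ) * a₂ + b₂)) atTop
      (𝓝 (a₁ / a₂)) := by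
  have h0 : Tendsto (fun j : ℕ => (1:ℝ)/j) atTop (𝓝 0) :=
    tendsto_one_div_atTop_nhds_zero_nat
  have hnum : Tendsto (fun j : ℕ => a₁ + b₁ * (1/(j:ℝ))) atTop (𝓝 (a₁ + b₁ * 0)) :=
    tendsto_const_nhds.add (tendsto_const_nhds.mul h0)
  have hden : Tendsto (fun j : ℕ => a₂ + b₂ * (1/(j:ℝ))) atTop (𝓝 (a₂ + b₂ * 0)) :=
    tendsto_const_nhds.add (tendsto_const_nhds.mul h0)
  have hlim : Tendsto (fun j : ℕ => (a₁ + b₁ * (1/(j:ℝ))) / (a₂ + b₂ * (1/(j:ℝ)))) atTop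
      (𝓝 (a₁ / a₂)) := by
    have := hnum.div hden (by simpa using h)
    simp only [mul_zero, add_zero] at this; exact this
  apply Tendsto.congr' ?_ hlim
  filter_upwards [eventually_ge_atTop 1] with j hj
  have hj0 : (j:ℝ) ≠ 0 := Nat.cast_ne_zero.mpr (by omega)
  have e : ∀ x y : ℝ, (j:ℝ) * (x + y * (1/(j:ℝ))) = (j:ℝ) * x + y := by
    intro x y; field_simp
  rw [← mul_div_mul_left (a₁ + b₁ * (1/(j:ℝ))) (a₂ + b₂ * (1/(j:ℝ))) hj0, e, e]

end Aux

/-- For `B₁ = diag(λ,δ)` and `B₂ = λ·R_{π/(2k)}` with `k ≥ 1`: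
`𝔯_q(B₁,B₂,p) ≤ q·log(min{p,1−p})/((q−1)·log √(λδ))`. -/
theorem stmt15 (q p lam del : ℝ) (hq : 1 < q) (hp : p ∈ Set.Ioo (0 : ℝ) 1)
    (hdel : 0 < del) (hdl : del < lam) (hlam : lam < 1 / 2)
    (hsmall : q * Real.log (min p (1 - p)) / ((q - 1) * Real.log (Real.sqrt (lam * del))) < 1)
    (k : ℕ) (hk : 1 ≤ k) :
    rqDim ![Matrix.diagonal ![lam, del], lam • rot (Real.pi / (2 * k))] p q
      ≤ q * Real.log (min p (1 - p)) / ((q - 1) * Real.log (Real.sqrt (lam * del))) := by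
  have hp0 : 0 < p := hp.1
  have hp1 : p < 1 := hp.2
  set P := min p (1 - p) with hPdef
  have hP0 : 0 < P := lt_min hp0 (by linarith)
  have hP1 : P < 1 := min_lt_iff.mpr (Or.inl hp1)
  have hL : Real.log P < 0 := Real.log_neg hP0 hP1
  have hlam0 : 0 < lam := hdel.trans hdl
  have hlam1 : lam < 1 := by linarith
  have hdel1 : del < 1 := by linarith
  have hla : Real.log lam < 0 := Real.log_neg hlam0 hlam1
  have hld : Real.log del < 0 := Real.log_neg hdel hdel1
  have hq0 : 0 < q - 1 := by linarith
  have hsq : Real.log (Real.sqrt (lam * del)) = (Real.log lam + Real.log del) / 2 := by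
    rw [Real.log_sqrt (by positivity), Real.log_mul hlam0.ne' hdel.ne']
  set a₁ : ℝ := 2 * q * (-Real.log P) with ha₁
  set b₁ : ℝ := 2 * q * (-Real.log P) * k with hb₁
  set a₂ : ℝ := (q - 1) * (-Real.log lam - Real.log del) with ha₂
  set b₂ : ℝ := (q - 1) * (2 * (k : ℝ) * (-Real.log lam)) with hb₂
  have hkc : (1 : ℝ) ≤ (k : ℝ) := by exact_mod_cast hk
  have ha₂0 : 0 < a₂ := mul_pos hq0 (by linarith)
  have ha₁0 : 0 < a₁ := mul_pos (by linarith) (by linarith)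
  have hTeq : a₁ / a₂ = q * Real.log P / ((q - 1) * Real.log (Real.sqrt (lam * del))) := by
    rw [hsq]
    have hne2 : (q - 1) * ((Real.log lam + Real.log del) / 2) ≠ 0 :=
      (mul_neg_of_pos_of_neg hq0 (by linarith)).ne
    rw [div_eq_div_iff ha₂0.ne' hne2, ha₁, ha₂]
    ring
  rw [rqDim, ← hTeq]
  apply Real.sSup_le _ (div_pos ha₁0 ha₂0).le
  rintro s ⟨hs0, hsum⟩
  set A2 := ![Matrix.diagonal ![lam, del], lam • rot (Real.pi / (2 * (k : ℝ)))] with hA2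
  have hZ0 : Filter.Tendsto (fun n : ℕ => Zsum A2 p q s (n + 1)) Filter.atTop (𝓝 0) :=
    hsum.tendsto_atTop_zero
  have key : ∀ j : ℕ, s ≤ ((j : ℝ) * a₁ + b₁) / ((j : ℝ) * a₂ + b₂) := by
    intro j
    set n₀ := j + k with hn₀
    have hn₀1 : 1 ≤ n₀ := by omega
    set u : Fin n₀ → Fin 2 :=
      Fin.append (fun _ : Fin j => (0 : Fin 2)) (fun _ : Fin k => (1 : Fin 2)) with hu
    set t : ℝ := lam ^ k * lam ^ k * lam ^ j * del ^ j with ht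
    have ht0 : 0 < t := by rw [ht]; positivity
    have hBu2 : (wordProd A2 u) ^ 2 = (-t) • 1 := by
      have hBu : wordProd A2 u
          = Matrix.diagonal ![lam, del] ^ j * (lam • rot (Real.pi / (2 * (k : ℝ)))) ^ k := by
        rw [hu, wordProd_append', wordProd_const', wordProd_const']
        congr 1 <;> simp [hA2]
      rw [hBu, smul_pow, rot_pow']
      have hang : (k : ℝ) * (Real.pi / (2 * (k : ℝ))) = Real.pi / 2 := by
        have hkne : (k : ℝ) ≠ 0 := by positivity
        field_simp
      have hdiag : Matrix.diagonal ![lam, del] ^ j = Matrix.diagonal ![lam ^ j, del ^ j] := by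
        rw [Matrix.diagonal_pow]
        apply congrArg Matrix.diagonal
        funext i; fin_cases i <;> simp
      rw [hang, rot_pi_div_two', hdiag, block_sq', ht]
    set r := t ^ (s * (1 - q)) * (P ^ q) ^ (2 * n₀) with hr
    have hPq0 : (0 : ℝ) < P ^ q := Real.rpow_pos_of_pos hP0 q
    have hr0 : 0 < r := by
      rw [hr]
      exact mul_pos (Real.rpow_pos_of_pos ht0 _) (pow_pos hPq0 _)
    have hterm : ∀ m : ℕ, r ^ (m + 1) ≤ Zsum A2 p q s (repLen n₀ (2 * (m + 1))) := by
      intro m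
      set N := repLen n₀ (2 * (m + 1)) with hN
      set w₀ : Fin N → Fin 2 := wrep u (2 * (m + 1)) with hw₀
      have hprodw : wordProd A2 w₀ = ((-t) ^ (m + 1)) • 1 := by
        rw [hw₀, wordProd_wrep', pow_mul, hBu2, smul_pow, one_pow]
      have hsvf : svf s (wordProd A2 w₀) = ((t ^ (m + 1) : ℝ)) ^ s := by
        rw [hprodw, svf_smul_one' s hs0 _ (pow_ne_zero _ (neg_ne_zero.mpr ht0.ne'))]
        congr 1
        rw [abs_pow, abs_neg, abs_of_pos ht0]
      have hnonneg : ∀ w : Fin N → Fin 2,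
          0 ≤ svf s (wordProd A2 w) ^ (1 - q) * ∏ i : Fin N, pvec p (w i) ^ q := by
        intro w
        apply mul_nonneg (Real.rpow_nonneg (svf_nonneg' _ _) _)
        refine Finset.prod_nonneg fun i _ => Real.rpow_nonneg ?_ _
        rcases (show w i = 0 ∨ w i = 1 by omega) with h | h <;> rw [h] <;>
          simp [pvec] <;> linarith
      have hmem := Finset.single_le_sum (f := fun w : Fin N → Fin 2 =>
          svf s (wordProd A2 w) ^ (1 - q) * ∏ i : Fin N, pvec p (w i) ^ q)
        (fun w _ => hnonneg w) (Finset.mem_univ w₀)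
      have hZdef : Zsum A2 p q s N = ∑ w : Fin N → Fin 2,
          svf s (wordProd A2 w) ^ (1 - q) * ∏ i : Fin N, pvec p (w i) ^ q := rfl
      rw [hZdef]
      refine le_trans ?_ hmem
      have e1 : svf s (wordProd A2 w₀) ^ (1 - q) = (t ^ (s * (1 - q))) ^ (m + 1) := by
        rw [hsvf, rpow_pow_comm' ht0 s (m + 1),
          rpow_pow_comm' (Real.rpow_pos_of_pos ht0 s) (1 - q) (m + 1),
          ← Real.rpow_mul ht0.le]
      have e2 : ((P ^ q) ^ (2 * n₀)) ^ (m + 1) ≤ ∏ i : Fin N, pvec p (w₀ i) ^ q := by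
        rw [← pow_mul]
        have hNeq : 2 * n₀ * (m + 1) = N := by rw [hN, repLen_eq]; ring
        rw [hNeq]
        have hconst : (P ^ q) ^ N = ∏ _i : Fin N, P ^ q := by
          rw [Finset.prod_const, Finset.card_univ, Fintype.card_fin]
        rw [hconst]
        apply Finset.prod_le_prod (fun i _ => hPq0.le)
        intro i _
        apply Real.rpow_le_rpow hP0.le ?_ (by linarith : (0 : ℝ) ≤ q)
        rcases (show w₀ i = 0 ∨ w₀ i = 1 by omega) with h | h
        · rw [h]
          show P ≤ pvec p 0
          rw [hPdef]
          simp only [pvec, Matrix.cons_val_zero]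
          exact min_le_left p (1 - p)
        · rw [h]
          show P ≤ pvec p 1
          rw [hPdef]
          simp only [pvec, Matrix.cons_val_one, Matrix.head_cons]
          exact min_le_right p (1 - p)
      rw [hr, mul_pow]
      exact mul_le_mul (le_of_eq e1.symm) e2 (pow_nonneg (pow_nonneg hPq0.le _) _)
        (Real.rpow_nonneg (svf_nonneg' _ _) _)
    have hZt : Filter.Tendsto (fun m : ℕ => Zsum A2 p q s (repLen n₀ (2 * (m + 1))))
        Filter.atTop (𝓝 0) := by
      have hmono : ∀ m : ℕ, m ≤ repLen n₀ (2 * (m + 1)) - 1 := by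
        intro m
        rw [repLen_eq]
        have h2 : 2 * (m + 1) ≤ n₀ * (2 * (m + 1)) := Nat.le_mul_of_pos_left _ (by omega)
        omega
      have hφ : Filter.Tendsto (fun m : ℕ => repLen n₀ (2 * (m + 1)) - 1)
          Filter.atTop Filter.atTop := Filter.tendsto_atTop_mono hmono Filter.tendsto_id
      have hcomp := hZ0.comp hφ
      apply hcomp.congr
      intro m
      simp only [Function.comp]
      congr 1
      have h3 : 1 ≤ repLen n₀ (2 * (m + 1)) := by
        rw [repLen_eq]
        have := Nat.mul_pos (show 0 < n₀ by omega) (show 0 < 2 * (m + 1) by omega)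
        omega
      omega
    have hrlt1 : r < 1 := by
      by_contra hcon
      push_neg at hcon
      have h1 : (1 : ℝ) ≤ 0 := by
        apply ge_of_tendsto hZt
        filter_upwards with m
        exact le_trans (one_le_pow₀ hcon) (hterm m)
      linarith
    have hlog : Real.log r < 0 := Real.log_neg hr0 hrlt1
    have hlogt : Real.log t = ((2 * k + j : ℕ) : ℝ) * Real.log lam
        + (j : ℝ) * Real.log del := by
      rw [ht, Real.log_mul (by positivity) (by positivity),
        Real.log_mul (by positivity) (by positivity),
        Real.log_mul (by positivity) (by positivity),
        Real.log_pow, Real.log_pow, Real.log_pow]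
      push_cast
      ring
    have hlogr : Real.log r = s * (1 - q) * Real.log t
        + ((2 * n₀ : ℕ) : ℝ) * (q * Real.log P) := by
      rw [hr, Real.log_mul (Real.rpow_pos_of_pos ht0 _).ne' (pow_pos hPq0 _).ne',
        Real.log_rpow ht0, Real.log_pow, Real.log_rpow hP0]
    have hfin : s * (1 - q) * (((2 * k + j : ℕ) : ℝ) * Real.log lam
        + (j : ℝ) * Real.log del) + ((2 * n₀ : ℕ) : ℝ) * (q * Real.log P) < 0 := by
      rw [← hlogt, ← hlogr]
      exact hlog
    have hb₂0 : 0 < b₂ := by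
      rw [hb₂]
      exact mul_pos hq0 (mul_pos (by linarith) (by linarith))
    have hden : 0 < (j : ℝ) * a₂ + b₂ :=
      add_pos_of_nonneg_of_pos (mul_nonneg (Nat.cast_nonneg j) ha₂0.le) hb₂0
    rw [le_div_iff₀ hden]
    rw [ha₁, hb₁, ha₂, hb₂]
    rw [hn₀] at hfin
    push_cast at hfin
    push_cast
    linarith [hfin]
  have hFt : Filter.Tendsto (fun j : ℕ => ((j : ℝ) * a₁ + b₁) / ((j : ℝ) * a₂ + b₂))
      Filter.atTop (𝓝 (a₁ / a₂)) := tendsto_lin_div' _ _ _ _ ha₂0.ne'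
  exact ge_of_tendsto hFt (Filter.Eventually.of_forall key)
end
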